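/- Let (L, ⊔) be a finite join-semilattice. Then the map x ↦ N(x) is injective: for all x, y ∈ L, if N(x) = N(y) then x = y. Consequently, since N(x ⊔ y) = N(x) ∪ N(y), L is isomorphic as a semilattice to the family {N(x) : x ∈ L} of sets under the union operation. -/

import Mathlib

/-- An element `s` of a join-semilattice is singular if the set of elements strictly
above `s` has a least element (a unique successor). -/
def Singular {L : Type*} [SemilatticeSup L] (s : L) : Prop :=
  ∃ t : L, IsLeast { x : L | s < x } t

/-- `N z`: the set of singular elements `s` with `¬ z ≤ s`. -/
def N {L : Type*} [SemilatticeSup L] (z : L) : Set L :=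
  { s | Singular s ∧ ¬ z ≤ s }

lemma exists_singular_sep {L : Type*} [SemilatticeSup L] [Fintype L] {x y : L}
    (h : ¬ y ≤ x) : ∃ s : L, Singular s ∧ x ≤ s ∧ ¬ y ≤ s := by
  obtain ⟨s, hs, hmax⟩ := Set.Finite.exists_maximalFor id {z : L | x ≤ z ∧ ¬ y ≤ z}
    (Set.toFinite _) ⟨x, le_refl x, h⟩
  refine ⟨s, ⟨s ⊔ y, ?_, ?_⟩, hs.1, hs.2⟩
  · exact left_lt_sup.2 hs.2
  · intro z hz
    have hyz : y ≤ z := by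
      by_contra hyz
      exact absurd (hmax (j := z) ⟨hs.1.trans hz.le, hyz⟩ hz.le) hz.not_ge
    exact sup_le hz.le hyz

theorem N_inj {L : Type*} [SemilatticeSup L] [Fintype L] :
    Function.Injective (N : L → Set L) := by
  intro x y hxy
  by_contra hne
  rcases (not_and_or.1 (fun h : x ≤ y ∧ y ≤ x => hne (le_antisymm h.1 h.2))) with h | h
  · obtain ⟨s, hsing, hys, hxs⟩ := exists_singular_sep h
    have : s ∈ N x := ⟨hsing, hxs⟩
    rw [hxy] at this
    exact this.2 hys
  · obtain ⟨s, hsing, hxs, hys⟩ := exists_singular_sep h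
    have : s ∈ N y := ⟨hsing, hys⟩
    rw [← hxy] at this
    exact this.2 hxs

/-- In a finite join-semilattice, the map `x ↦ N x` is injective; together with
`N (x ⊔ y) = N x ∪ N y`, this makes `L` isomorphic as a semilattice to the family
`{N x : x ∈ L}` under union. -/
theorem stmt13 {L : Type*} [SemilatticeSup L] [Fintype L] :
    Function.Injective (N : L → Set L) ∧
    (∀ x y : L, N (x ⊔ y) = N x ∪ N y) ∧
    ∃ φ : L → Set L, Function.Injective φ ∧
      Set.range φ = { A : Set L | ∃ x : L, A = N x } ∧
      ∀ x y : L, φ (x ⊔ y) = φ x ∪ φ y := by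
  have hcup : ∀ x y : L, N (x ⊔ y) = N x ∪ N y := by
    intro x y
    ext s
    simp only [N, Set.mem_setOf_eq, Set.mem_union, sup_le_iff, not_and_or]
    tauto
  refine ⟨N_inj, hcup, N, N_inj, ?_, hcup⟩
  ext A
  simp [Set.range, eq_comm]
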